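/- Let n ≥ 1, j ∈ {1,…,n}, T a j-tableau, and i ∈ {j,…,2n} an index such that the first j−1 boxes of the row R_i of T are empty. Then the T-path (i_0, i_1, i_2, …) from the box C_j ∩ R_i is eventually stationary, and its eventual value (its arrival) lies in {j,…,n} ∪ {n+j,…,2n}. Moreover, the map π_j^T sending each such index i to the arrival of the T-path from the box C_j ∩ R_i is a bijection from the set {i ∈ {j,…,2n} : the boxes of row R_i in columns C_1,…,C_{j−1} are empty} onto {j,…,n} ∪ {n+j,…,2n}. -/

import Mathlib

/-- The physical height of the row named `R_i` (for `1 ≤ i ≤ 2n`): from bottom to top the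
rows are `R_1, …, R_n, R_{2n-1}, R_{2n-2}, …, R_{n+1}, R_{2n}`, so `h(i) = i` for
`1 ≤ i ≤ n`, `h(i) = 3n - i` for `n + 1 ≤ i ≤ 2n - 1`, and `h(2n) = 2n`. -/
def hgt (n i : ℕ) : ℕ :=
  if i ≤ n then i else if i = 2 * n then 2 * n else 3 * n - i

/-- A `j`-tableau with `n` columns and `2n` rows.  A dot is recorded as a pair
`(c, i)`: a dot in column `C_c` lying in the row named `R_i`.  Every dot satisfies
`c ≤ hgt n i` (it lies above the diagonal, `hgt n i` being the physical height of its row);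
columns `C_1, …, C_{j-1}` contain exactly two dots and every column at most two;
rows `R_1, …, R_{j-1}` contain exactly one dot and every row at most one. -/
def IsJTableau (n j : ℕ) (T : Finset (ℕ × ℕ)) : Prop :=
  (∀ d ∈ T, 1 ≤ d.1 ∧ d.1 ≤ n ∧ 1 ≤ d.2 ∧ d.2 ≤ 2 * n ∧ d.1 ≤ hgt n d.2) ∧
  (∀ c, 1 ≤ c → c < j → (T.filter (fun d => d.1 = c)).card = 2) ∧
  (∀ c, (T.filter (fun d => d.1 = c)).card ≤ 2) ∧
  (∀ i, 1 ≤ i → i < j → (T.filter (fun d => d.2 = i)).card = 1) ∧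
  (∀ i, (T.filter (fun d => d.2 = i)).card ≤ 1)

/-- `r` names the row of the upper dot of column `C_c` of `T` (the dot of `C_c` whose
row has maximal physical height). -/
def IsUpperDotRow (n : ℕ) (T : Finset (ℕ × ℕ)) (c r : ℕ) : Prop :=
  (c, r) ∈ T ∧ ∀ r', (c, r') ∈ T → hgt n r' ≤ hgt n r

/-- `r` names the row of the lower dot of column `C_c` of `T`. -/
def IsLowerDotRow (n : ℕ) (T : Finset (ℕ × ℕ)) (c r : ℕ) : Prop :=
  (c, r) ∈ T ∧ ∀ r', (c, r') ∈ T → hgt n r ≤ hgt n r'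

/-- The arrival set `{j, …, n} ∪ {n + j, …, 2n}`. -/
def Arrival (n j a : ℕ) : Prop := (j ≤ a ∧ a ≤ n) ∨ (n + j ≤ a ∧ a ≤ 2 * n)

/-- One step of a `T`-path: (1) if `a ∈ {j, …, n} ∪ {n + j, …, 2n}` then `b = a`;
(2) if `a = n + j_k` with `j_k ∈ {1, …, j-1}` then `b` names the row of the upper dot
of column `C_{j_k}`; (3) if `a ∈ {1, …, j-1}` then `b` names the row of the lower dot
of column `C_a`. -/
def PathStep (n j : ℕ) (T : Finset (ℕ × ℕ)) (a b : ℕ) : Prop :=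
  (Arrival n j a ∧ b = a) ∨
  ((n + 1 ≤ a ∧ a < n + j) ∧ IsUpperDotRow n T (a - n) b) ∨
  ((1 ≤ a ∧ a < j) ∧ IsLowerDotRow n T a b)

/-- The domain of `π_j^T`: indices `i ∈ {j, …, 2n}` such that the boxes of row `R_i` in
columns `C_1, …, C_{j-1}` are empty. -/
def PiDomain (n j : ℕ) (T : Finset (ℕ × ℕ)) : Set ℕ :=
  {i | j ≤ i ∧ i ≤ 2 * n ∧ ∀ c, 1 ≤ c → c < j → (c, i) ∉ T}

section AuxTPath

variable {n j : ℕ} {T : Finset (ℕ × ℕ)}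

lemma hgt_injOn {a b : ℕ} (ha1 : 1 ≤ a) (ha2 : a ≤ 2 * n) (hb1 : 1 ≤ b) (hb2 : b ≤ 2 * n)
    (h : hgt n a = hgt n b) : a = b := by
  unfold hgt at h
  split_ifs at h <;> omega

lemma row_uniq (hrow : ∀ i, (T.filter (fun d => d.2 = i)).card ≤ 1)
    {c c' r : ℕ} (h1 : (c, r) ∈ T) (h2 : (c', r) ∈ T) : c = c' := by
  have h := Finset.card_le_one.mp (hrow r) (c, r)
    (Finset.mem_filter.mpr ⟨h1, rfl⟩) (c', r) (Finset.mem_filter.mpr ⟨h2, rfl⟩)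
  exact congrArg Prod.fst h

lemma col_two {c : ℕ} (h : (T.filter (fun d => d.1 = c)).card = 2) :
    ∃ r1 r2 : ℕ, r1 ≠ r2 ∧ (c, r1) ∈ T ∧ (c, r2) ∈ T ∧
      ∀ r, (c, r) ∈ T → r = r1 ∨ r = r2 := by
  obtain ⟨a, b, hab, hs⟩ := Finset.card_eq_two.mp h
  have ha : a ∈ T.filter (fun d => d.1 = c) := hs ▸ Finset.mem_insert_self a {b}
  have hb : b ∈ T.filter (fun d => d.1 = c) :=
    hs ▸ (Finset.mem_insert_of_mem (Finset.mem_singleton_self b))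
  rw [Finset.mem_filter] at ha hb
  refine ⟨a.2, b.2, ?_, ?_, ?_, ?_⟩
  · intro hr
    exact hab (Prod.ext (ha.2.trans hb.2.symm) hr)
  · have he : (c, a.2) = a := Prod.ext ha.2.symm rfl
    rw [he]; exact ha.1
  · have he : (c, b.2) = b := Prod.ext hb.2.symm rfl
    rw [he]; exact hb.1
  · intro r hr
    have hmem : (c, r) ∈ T.filter (fun d => d.1 = c) := Finset.mem_filter.mpr ⟨hr, rfl⟩
    rw [hs, Finset.mem_insert, Finset.mem_singleton] at hmem
    rcases hmem with h' | h'
    · left; exact congrArg Prod.snd h'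
    · right; exact congrArg Prod.snd h'

lemma exists_lower_upper (hT : IsJTableau n j T) {c : ℕ} (hc1 : 1 ≤ c) (hc2 : c < j) :
    ∃ rl ru : ℕ, rl ≠ ru ∧ (c, rl) ∈ T ∧ (c, ru) ∈ T ∧
      IsLowerDotRow n T c rl ∧ IsUpperDotRow n T c ru := by
  obtain ⟨r1, r2, hne, h1, h2, hall⟩ := col_two (hT.2.1 c hc1 hc2)
  have hb1 := hT.1 _ h1
  have hb2 := hT.1 _ h2
  have hhne : hgt n r1 ≠ hgt n r2 := fun h =>
    hne (hgt_injOn hb1.2.2.1 hb1.2.2.2.1 hb2.2.2.1 hb2.2.2.2.1 h)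
  rcases lt_or_gt_of_ne hhne with hlt | hlt
  · refine ⟨r1, r2, hne, h1, h2, ⟨h1, ?_⟩, ⟨h2, ?_⟩⟩
    · intro r' hr'; rcases hall r' hr' with rfl | rfl
      · exact le_refl _
      · exact le_of_lt hlt
    · intro r' hr'; rcases hall r' hr' with rfl | rfl
      · exact le_of_lt hlt
      · exact le_refl _
  · refine ⟨r2, r1, hne.symm, h2, h1, ⟨h2, ?_⟩, ⟨h1, ?_⟩⟩
    · intro r' hr'; rcases hall r' hr' with rfl | rfl
      · exact le_of_lt hlt
      · exact le_refl _
    · intro r' hr'; rcases hall r' hr' with rfl | rfl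
      · exact le_refl _
      · exact le_of_lt hlt

lemma lower_upper_ne (hT : IsJTableau n j T) {c r : ℕ} (hc1 : 1 ≤ c) (hc2 : c < j)
    (hl : IsLowerDotRow n T c r) (hu : IsUpperDotRow n T c r) : False := by
  obtain ⟨rl, ru, hne, hrl, hru, _, _⟩ := exists_lower_upper hT hc1 hc2
  have hbl := hT.1 _ hrl
  have hbu := hT.1 _ hru
  have e1 : hgt n rl = hgt n ru := le_antisymm
    (le_trans (hu.2 rl hrl) (hl.2 ru hru)) (le_trans (hu.2 ru hru) (hl.2 rl hrl))
  exact hne (hgt_injOn hbl.2.2.1 hbl.2.2.2.1 hbu.2.2.1 hbu.2.2.2.1 e1)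

lemma upper_uniq (hT : IsJTableau n j T) {c r r' : ℕ}
    (h : IsUpperDotRow n T c r) (h' : IsUpperDotRow n T c r') : r = r' := by
  have hb := hT.1 _ h.1
  have hb' := hT.1 _ h'.1
  exact hgt_injOn hb.2.2.1 hb.2.2.2.1 hb'.2.2.1 hb'.2.2.2.1
    (le_antisymm (h'.2 r h.1) (h.2 r' h'.1))

lemma lower_uniq (hT : IsJTableau n j T) {c r r' : ℕ}
    (h : IsLowerDotRow n T c r) (h' : IsLowerDotRow n T c r') : r = r' := by
  have hb := hT.1 _ h.1
  have hb' := hT.1 _ h'.1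
  exact hgt_injOn hb.2.2.1 hb.2.2.2.1 hb'.2.2.1 hb'.2.2.2.1
    (le_antisymm (h.2 r' h'.1) (h'.2 r h.1))

lemma pathStep_det (hT : IsJTableau n j T) (hjn : j ≤ n) {a b b' : ℕ}
    (h1 : PathStep n j T a b) (h2 : PathStep n j T a b') : b = b' := by
  rcases h1 with ⟨hA, rfl⟩ | ⟨⟨h1a, h1b⟩, hu⟩ | ⟨⟨h1a, h1b⟩, hl⟩ <;>
    rcases h2 with ⟨hA', rfl⟩ | ⟨⟨h2a, h2b⟩, hu'⟩ | ⟨⟨h2a, h2b⟩, hl'⟩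
  · rfl
  · rcases hA with ⟨h, h'⟩ | ⟨h, h'⟩ <;> omega
  · rcases hA with ⟨h, h'⟩ | ⟨h, h'⟩ <;> omega
  · rcases hA' with ⟨h, h'⟩ | ⟨h, h'⟩ <;> omega
  · exact upper_uniq hT hu hu'
  · omega
  · rcases hA' with ⟨h, h'⟩ | ⟨h, h'⟩ <;> omega
  · omega
  · exact lower_uniq hT hl hl'

end AuxTPath

/-- For `1 ≤ j ≤ n` and `T` a `j`-tableau: for each `i ∈ {j, …, 2n}` whose first `j - 1`
boxes of row `R_i` are empty, a `T`-path from the box `C_j ∩ R_i` exists, every such path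
is eventually stationary with a common eventual value `π i` lying in
`{j, …, n} ∪ {n + j, …, 2n}`, and the arrival map `π` is a bijection from the domain onto
`{j, …, n} ∪ {n + j, …, 2n}`. -/
theorem tpath_stationary_and_pi_bijective (n j : ℕ) (hn : 1 ≤ n) (hj1 : 1 ≤ j)
    (hjn : j ≤ n) (T : Finset (ℕ × ℕ)) (hT : IsJTableau n j T) :
    ∃ π : ℕ → ℕ,
      (∀ i ∈ PiDomain n j T,
        (∃ s : ℕ → ℕ, s 0 = i ∧ ∀ k, PathStep n j T (s k) (s (k + 1))) ∧
        (∀ s : ℕ → ℕ, s 0 = i → (∀ k, PathStep n j T (s k) (s (k + 1))) →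
          ∃ N, ∀ k, N ≤ k → s k = π i) ∧
        Arrival n j (π i)) ∧
      Set.BijOn π (PiDomain n j T) {a | Arrival n j a} := by
  classical
  have hdot := hT.1
  have hrowle := hT.2.2.2.2
  -- the step function
  have hFex : ∀ a : ℕ, ∃ b : ℕ, 1 ≤ a → a ≤ 2 * n →
      PathStep n j T a b ∧ 1 ≤ b ∧ b ≤ 2 * n ∧
      (¬ Arrival n j a → ∃ c, 1 ≤ c ∧ c < j ∧ (c, b) ∈ T) := by
    intro a
    by_cases h1 : 1 ≤ a ∧ a ≤ 2 * n
    · obtain ⟨ha1, ha2⟩ := h1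
      by_cases hA : Arrival n j a
      · exact ⟨a, fun _ _ => ⟨Or.inl ⟨hA, rfl⟩, ha1, ha2, fun h => absurd hA h⟩⟩
      · have hcase : (1 ≤ a ∧ a < j) ∨ (n + 1 ≤ a ∧ a < n + j) := by
          simp only [Arrival] at hA; omega
        rcases hcase with ⟨hc1, hc2⟩ | ⟨hc1, hc2⟩
        · obtain ⟨rl, ru, hne, hrl, hru, hl, hu⟩ := exists_lower_upper hT hc1 hc2
          have hb := hdot _ hrl
          exact ⟨rl, fun _ _ => ⟨Or.inr (Or.inr ⟨⟨hc1, hc2⟩, hl⟩), hb.2.2.1, hb.2.2.2.1,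
            fun _ => ⟨a, hc1, hc2, hrl⟩⟩⟩
        · have hc1' : 1 ≤ a - n := by omega
          have hc2' : a - n < j := by omega
          obtain ⟨rl, ru, hne, hrl, hru, hl, hu⟩ := exists_lower_upper hT hc1' hc2'
          have hb := hdot _ hru
          exact ⟨ru, fun _ _ => ⟨Or.inr (Or.inl ⟨⟨hc1, hc2⟩, hu⟩), hb.2.2.1, hb.2.2.2.1,
            fun _ => ⟨a - n, hc1', hc2', hru⟩⟩⟩
    · exact ⟨0, fun h2 h3 => absurd ⟨h2, h3⟩ h1⟩
  choose F hF using hFex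
  have hFstep : ∀ a, 1 ≤ a → a ≤ 2 * n → PathStep n j T a (F a) :=
    fun a h1 h2 => (hF a h1 h2).1
  have hFlb : ∀ a, 1 ≤ a → a ≤ 2 * n → 1 ≤ F a := fun a h1 h2 => (hF a h1 h2).2.1
  have hFub : ∀ a, 1 ≤ a → a ≤ 2 * n → F a ≤ 2 * n := fun a h1 h2 => (hF a h1 h2).2.2.1
  have hFR : ∀ a, 1 ≤ a → a ≤ 2 * n → ¬ Arrival n j a →
      ∃ c, 1 ≤ c ∧ c < j ∧ (c, F a) ∈ T := fun a h1 h2 => (hF a h1 h2).2.2.2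
  have hFfix : ∀ a, 1 ≤ a → a ≤ 2 * n → Arrival n j a → F a = a := by
    intro a h1 h2 hA
    exact pathStep_det hT hjn (hFstep a h1 h2) (Or.inl ⟨hA, rfl⟩)
  -- backward injectivity
  have hback : ∀ a b, 1 ≤ a → a ≤ 2 * n → 1 ≤ b → b ≤ 2 * n →
      ¬ Arrival n j a → ¬ Arrival n j b → F a = F b → a = b := by
    intro a b ha1 ha2 hb1 hb2 hA hB heq
    have hsa := hFstep a ha1 ha2
    have hsb := hFstep b hb1 hb2
    rcases hsa with ⟨h, _⟩ | ⟨⟨ha1', ha2'⟩, hua⟩ | ⟨⟨ha1', ha2'⟩, hla⟩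
    · exact absurd h hA
    · rcases hsb with ⟨h, _⟩ | ⟨⟨hb1', hb2'⟩, hub⟩ | ⟨⟨hb1', hb2'⟩, hlb⟩
      · exact absurd h hB
      · have := row_uniq hrowle hua.1 (show (b - n, F a) ∈ T by rw [heq]; exact hub.1)
        omega
      · have hab : a - n = b := row_uniq hrowle hua.1 (show (b, F a) ∈ T by rw [heq]; exact hlb.1)
        have h3 : IsUpperDotRow n T b (F b) := by rw [← heq, ← hab]; exact hua
        exact absurd h3 (fun h3 => lower_upper_ne hT hb1' hb2' hlb h3)
    · rcases hsb with ⟨h, _⟩ | ⟨⟨hb1', hb2'⟩, hub⟩ | ⟨⟨hb1', hb2'⟩, hlb⟩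
      · exact absurd h hB
      · have hab : a = b - n := row_uniq hrowle hla.1 (show (b - n, F a) ∈ T by rw [heq]; exact hub.1)
        have h3 : IsUpperDotRow n T a (F a) := by rw [heq, hab]; exact hub
        exact absurd h3 (fun h3 => lower_upper_ne hT ha1' ha2' hla h3)
      · exact row_uniq hrowle hla.1 (show (b, F a) ∈ T by rw [heq]; exact hlb.1)
  -- trajectories
  have hbounds : ∀ i, 1 ≤ i → i ≤ 2 * n → ∀ k, 1 ≤ F^[k] i ∧ F^[k] i ≤ 2 * n := by
    intro i h1 h2 k
    induction k with
    | zero => exact ⟨h1, h2⟩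
    | succ k ih =>
      rw [Function.iterate_succ_apply']
      exact ⟨hFlb _ ih.1 ih.2, hFub _ ih.1 ih.2⟩
  have habs : ∀ i, 1 ≤ i → i ≤ 2 * n → ∀ m, Arrival n j (F^[m] i) →
      ∀ k, m ≤ k → F^[k] i = F^[m] i := by
    intro i h1 h2 m hm k hk
    induction k with
    | zero =>
      have : m = 0 := Nat.le_zero.mp hk
      rw [this]
    | succ k ih =>
      rcases Nat.lt_or_ge m (k + 1) with h | h
      · have hk' : m ≤ k := by omega
        rw [Function.iterate_succ_apply', ih hk']
        exact hFfix _ (hbounds i h1 h2 m).1 (hbounds i h1 h2 m).2 hm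
      · have hkm : m = k + 1 := by omega
        rw [hkm]
  -- every trajectory from the domain reaches an arrival state within 2n steps
  have hreach : ∀ i, j ≤ i → i ≤ 2 * n → (∀ c, 1 ≤ c → c < j → (c, i) ∉ T) →
      ∃ m, m ≤ 2 * n ∧ Arrival n j (F^[m] i) := by
    intro i hij hi2 hiR
    have hi1 : 1 ≤ i := le_trans hj1 hij
    by_contra hcon
    push_neg at hcon
    have hmap : ∀ k ∈ Finset.range (2 * n + 1),
        F^[k] i ∈ (Finset.Icc 1 (j - 1)) ∪ (Finset.Icc (n + 1) (n + j - 1)) := by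
      intro k hk
      rw [Finset.mem_range] at hk
      have hb := hbounds i hi1 hi2 k
      have hA := hcon k (by omega)
      simp only [Arrival] at hA
      simp only [Finset.mem_union, Finset.mem_Icc]
      omega
    have hcard : ((Finset.Icc 1 (j - 1)) ∪ (Finset.Icc (n + 1) (n + j - 1))).card <
        (Finset.range (2 * n + 1)).card := by
      have h1 := Finset.card_union_le (Finset.Icc 1 (j - 1)) (Finset.Icc (n + 1) (n + j - 1))
      rw [Nat.card_Icc, Nat.card_Icc] at h1
      rw [Finset.card_range]
      omega
    obtain ⟨k, hk, l, hl, hkl, heq⟩ :=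
      Finset.exists_ne_map_eq_of_card_lt_of_maps_to hcard hmap
    rw [Finset.mem_range] at hk hl
    -- wlog k < l
    have hmerge : ∀ k l, k < l → l ≤ 2 * n → F^[k] i = F^[l] i → False := by
      intro k l hkl' hl2 heq'
      have hstepdown : ∀ d, d ≤ k → F^[k - d] i = F^[l - d] i := by
        intro d
        induction d with
        | zero => intro _; exact heq'
        | succ d ih =>
          intro hd
          have ihh := ih (by omega)
          have e1 : F^[k - d] i = F (F^[k - (d + 1)] i) := by
            conv_lhs => rw [show (k - d) = (k - (d + 1)) + 1 by omega]
            rw [Function.iterate_succ_apply']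
          have e2 : F^[l - d] i = F (F^[l - (d + 1)] i) := by
            conv_lhs => rw [show (l - d) = (l - (d + 1)) + 1 by omega]
            rw [Function.iterate_succ_apply']
          have hb1 := hbounds i hi1 hi2 (k - (d + 1))
          have hb2 := hbounds i hi1 hi2 (l - (d + 1))
          exact hback _ _ hb1.1 hb1.2 hb2.1 hb2.2 (hcon _ (by omega)) (hcon _ (by omega))
            (by rw [← e1, ← e2]; exact ihh)
      have h0 : i = F^[l - k] i := by
        have := hstepdown k le_rfl
        simpa [Nat.sub_self] using this
      have e2 : F^[l - k] i = F (F^[l - k - 1] i) := by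
        conv_lhs => rw [show (l - k) = (l - k - 1) + 1 by omega]
        rw [Function.iterate_succ_apply']
      have hb := hbounds i hi1 hi2 (l - k - 1)
      obtain ⟨c, hc1, hc2, hcT⟩ := hFR _ hb.1 hb.2 (hcon _ (by omega))
      rw [← e2, ← h0] at hcT
      exact hiR c hc1 hc2 hcT
    rcases Nat.lt_or_ge k l with h | h
    · exact absurd heq (by intro h'; exact hmerge k l h (by omega) h')
    · have : l < k := by omega
      exact absurd heq.symm (by intro h'; exact hmerge l k this (by omega) h')
  -- first arrival time
  have hNfact : ∀ i ∈ PiDomain n j T, ∃ N, N ≤ 2 * n ∧ Arrival n j (F^[N] i) ∧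
      (∀ l, l < N → ¬ Arrival n j (F^[l] i)) ∧ (∀ k, N ≤ k → F^[k] i = F^[N] i) := by
    intro i hi
    obtain ⟨hij, hi2, hiR⟩ := hi
    have hi1 : 1 ≤ i := le_trans hj1 hij
    obtain ⟨m, hm2, hmA⟩ := hreach i hij hi2 hiR
    have hex : ∃ m, Arrival n j (F^[m] i) := ⟨m, hmA⟩
    refine ⟨Nat.find hex, (Nat.find_min' hex hmA).trans hm2, Nat.find_spec hex,
      fun l hl => Nat.find_min hex hl, fun k hk => habs i hi1 hi2 _ (Nat.find_spec hex) k hk⟩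
  choose! Nt hN1 hN2 hN3 hN4 using hNfact
  refine ⟨fun i => F^[2 * n] i, ?_, ?_, ?_, ?_⟩
  · -- part 1
    intro i hi
    obtain ⟨hij, hi2, hiR⟩ := hi
    have hi' : i ∈ PiDomain n j T := ⟨hij, hi2, hiR⟩
    have hi1 : 1 ≤ i := le_trans hj1 hij
    refine ⟨⟨fun k => F^[k] i, rfl, ?_⟩, ?_, ?_⟩
    · intro k
      have hb := hbounds i hi1 hi2 k
      show PathStep n j T (F^[k] i) (F^[k + 1] i)
      rw [Function.iterate_succ_apply']
      exact hFstep _ hb.1 hb.2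
    · intro s hs0 hstep
      have hsk : ∀ k, s k = F^[k] i := by
        intro k
        induction k with
        | zero => exact hs0
        | succ k ih =>
          have hb := hbounds i hi1 hi2 k
          have h1 : PathStep n j T (F^[k] i) (s (k + 1)) := ih ▸ hstep k
          rw [Function.iterate_succ_apply']
          exact pathStep_det hT hjn h1 (hFstep _ hb.1 hb.2)
      refine ⟨2 * n, fun k hk => ?_⟩
      show s k = F^[2 * n] i
      rw [hsk k, hN4 i hi' k (le_trans (hN1 i hi') hk), ← hN4 i hi' (2 * n) (hN1 i hi')]
    · show Arrival n j (F^[2 * n] i)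
      rw [hN4 i hi' (2 * n) (hN1 i hi')]
      exact hN2 i hi'
  · -- MapsTo
    intro i hi
    obtain ⟨hij, hi2, hiR⟩ := hi
    have hi' : i ∈ PiDomain n j T := ⟨hij, hi2, hiR⟩
    show Arrival n j (F^[2 * n] i)
    rw [hN4 i hi' (2 * n) (hN1 i hi')]
    exact hN2 i hi'
  · -- InjOn
    have key : ∀ i i', i ∈ PiDomain n j T → i' ∈ PiDomain n j T →
        F^[2 * n] i = F^[2 * n] i' → Nt i ≤ Nt i' → i = i' := by
      intro i i' hi hi' heq hNle
      obtain ⟨hij, hi2, hiR⟩ := hi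
      have hiD : i ∈ PiDomain n j T := ⟨hij, hi2, hiR⟩
      obtain ⟨hij', hi2', hiR'⟩ := hi'
      have hiD' : i' ∈ PiDomain n j T := ⟨hij', hi2', hiR'⟩
      have hi1 : 1 ≤ i := le_trans hj1 hij
      have hi1' : 1 ≤ i' := le_trans hj1 hij'
      have hpp : F^[Nt i] i = F^[Nt i'] i' := by
        rw [← hN4 i hiD (2 * n) (hN1 i hiD), ← hN4 i' hiD' (2 * n) (hN1 i' hiD')]
        exact heq
      have hdown : ∀ d, d ≤ Nt i → F^[Nt i - d] i = F^[Nt i' - d] i' := by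
        intro d
        induction d with
        | zero => intro _; exact hpp
        | succ d ih =>
          intro hd
          have ihh := ih (by omega)
          have e1 : F^[Nt i - d] i = F (F^[Nt i - (d + 1)] i) := by
            conv_lhs => rw [show (Nt i - d) = (Nt i - (d + 1)) + 1 by omega]
            rw [Function.iterate_succ_apply']
          have e2 : F^[Nt i' - d] i' = F (F^[Nt i' - (d + 1)] i') := by
            conv_lhs => rw [show (Nt i' - d) = (Nt i' - (d + 1)) + 1 by omega]
            rw [Function.iterate_succ_apply']
          have hb1 := hbounds i hi1 hi2 (Nt i - (d + 1))
          have hb2 := hbounds i' hi1' hi2' (Nt i' - (d + 1))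
          exact hback _ _ hb1.1 hb1.2 hb2.1 hb2.2
            (hN3 i hiD _ (by omega)) (hN3 i' hiD' _ (by omega))
            (by rw [← e1, ← e2]; exact ihh)
      have h0 : i = F^[Nt i' - Nt i] i' := by
        have := hdown (Nt i) le_rfl
        simpa using this
      by_cases hzero : Nt i' - Nt i = 0
      · rw [hzero] at h0
        exact h0
      · exfalso
        have e2 : F^[Nt i' - Nt i] i' = F (F^[Nt i' - Nt i - 1] i') := by
          conv_lhs => rw [show (Nt i' - Nt i) = (Nt i' - Nt i - 1) + 1 by omega]
          rw [Function.iterate_succ_apply']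
        have hb := hbounds i' hi1' hi2' (Nt i' - Nt i - 1)
        obtain ⟨c, hc1, hc2, hcT⟩ := hFR _ hb.1 hb.2 (hN3 i' hiD' _ (by omega))
        rw [← e2, ← h0] at hcT
        exact hiR c hc1 hc2 hcT
    intro i hi i' hi' h
    rcases le_total (Nt i) (Nt i') with h' | h'
    · exact key i i' hi hi' h h'
    · exact (key i' i hi' hi h.symm h').symm
  · -- SurjOn
    set Afin : Finset ℕ := Finset.Icc j n ∪ Finset.Icc (n + j) (2 * n) with hAfin
    set Tj : Finset (ℕ × ℕ) := T.filter (fun d => 1 ≤ d.1 ∧ d.1 < j) with hTjdef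
    set RowsJ : Finset ℕ := Tj.image Prod.snd with hRowsJdef
    set Dfin : Finset ℕ := (Finset.Icc j (2 * n)).filter
      (fun i => ∀ c, 1 ≤ c → c < j → (c, i) ∉ T) with hDfindef
    have hDfinmem : ∀ i, i ∈ Dfin ↔ i ∈ PiDomain n j T := by
      intro i
      simp only [hDfindef, Finset.mem_filter, Finset.mem_Icc]
      constructor
      · rintro ⟨⟨h1, h2⟩, h3⟩; exact ⟨h1, h2, h3⟩
      · rintro ⟨h1, h2, h3⟩; exact ⟨⟨h1, h2⟩, h3⟩
    have hAfinmem : ∀ a, a ∈ Afin ↔ Arrival n j a := by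
      intro a
      rw [hAfin, Finset.mem_union, Finset.mem_Icc, Finset.mem_Icc]
      rfl
    have hTjcard : Tj.card = 2 * (j - 1) := by
      have hsplit : Tj = (Finset.Icc 1 (j - 1)).biUnion
          (fun c => T.filter (fun d => d.1 = c)) := by
        ext d
        simp only [hTjdef, Finset.mem_filter, Finset.mem_biUnion, Finset.mem_Icc]
        constructor
        · rintro ⟨hd, h1, h2⟩
          exact ⟨d.1, ⟨h1, by omega⟩, hd, rfl⟩
        · rintro ⟨c, ⟨h1, h2⟩, hd, hc⟩
          exact ⟨hd, by omega⟩
      rw [hsplit, Finset.card_biUnion]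
      · rw [Finset.sum_congr rfl
          (fun c hc => hT.2.1 c (Finset.mem_Icc.mp hc).1
            (by have := (Finset.mem_Icc.mp hc).2; omega))]
        rw [Finset.sum_const, Nat.card_Icc, smul_eq_mul]
        omega
      · intro x _ y _ hxy
        rw [Function.onFun, Finset.disjoint_left]
        rintro d hd hd'
        rw [Finset.mem_filter] at hd hd'
        exact hxy (hd.2 ▸ hd'.2 ▸ rfl)
    have hRowsJcard : RowsJ.card = 2 * (j - 1) := by
      rw [hRowsJdef, Finset.card_image_of_injOn, hTjcard]
      intro d hd d' hd' hdd
      simp only [hTjdef, Finset.coe_filter, Set.mem_setOf_eq] at hd hd'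
      have hcc : d.1 = d'.1 := by
        refine row_uniq hrowle (show (d.1, d.2) ∈ T by rw [Prod.mk.eta]; exact hd.1) ?_
        rw [hdd, Prod.mk.eta]
        exact hd'.1
      exact Prod.ext hcc hdd
    have hRowsJ2n : ∀ r ∈ RowsJ, 1 ≤ r ∧ r ≤ 2 * n := by
      intro r hr
      rw [hRowsJdef, Finset.mem_image] at hr
      obtain ⟨d, hd, rfl⟩ := hr
      rw [hTjdef, Finset.mem_filter] at hd
      have := hdot d hd.1
      exact ⟨this.2.2.1, this.2.2.2.1⟩
    have hlow : Finset.Icc 1 (j - 1) ⊆ RowsJ := by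
      intro r hr
      rw [Finset.mem_Icc] at hr
      have hcard1 := hT.2.2.2.1 r hr.1 (by omega)
      obtain ⟨d, hd⟩ := Finset.card_eq_one.mp hcard1
      have hdT : d ∈ T ∧ d.2 = r := Finset.mem_filter.mp (hd ▸ Finset.mem_singleton_self d)
      have hb := hdot d hdT.1
      have hhgt : hgt n d.2 = r := by
        rw [hdT.2]
        unfold hgt
        rw [if_pos (by omega)]
      rw [hRowsJdef, Finset.mem_image]
      refine ⟨d, ?_, hdT.2⟩
      rw [hTjdef, Finset.mem_filter]
      have := hb.2.2.2.2
      exact ⟨hdT.1, hb.1, by omega⟩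
    have hmid : (RowsJ ∩ Finset.Icc j (2 * n)).card = j - 1 := by
      have hsplit : RowsJ = (Finset.Icc 1 (j - 1)) ∪ (RowsJ ∩ Finset.Icc j (2 * n)) := by
        ext r
        simp only [Finset.mem_union, Finset.mem_inter, Finset.mem_Icc]
        constructor
        · intro hr
          have hb := hRowsJ2n r hr
          by_cases h : r ≤ j - 1
          · left; omega
          · right; exact ⟨hr, by omega, hb.2⟩
        · rintro (h | h)
          · exact hlow (Finset.mem_Icc.mpr h)
          · exact h.1
      have hdisj : Disjoint (Finset.Icc 1 (j - 1)) (RowsJ ∩ Finset.Icc j (2 * n)) := by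
        rw [Finset.disjoint_left]
        intro a ha hmem
        rw [Finset.mem_Icc] at ha
        rw [Finset.mem_inter, Finset.mem_Icc] at hmem
        omega
      have hcrd := congrArg Finset.card hsplit
      rw [Finset.card_union_of_disjoint hdisj, Nat.card_Icc, hRowsJcard] at hcrd
      omega
    have hDeq : Dfin = Finset.Icc j (2 * n) \ RowsJ := by
      ext i
      simp only [hDfindef, Finset.mem_filter, Finset.mem_sdiff]
      constructor
      · rintro ⟨h1, h2⟩
        refine ⟨h1, ?_⟩
        intro hmem
        rw [hRowsJdef, Finset.mem_image] at hmem
        obtain ⟨d, hd, hdi⟩ := hmem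
        rw [hTjdef, Finset.mem_filter] at hd
        refine h2 d.1 hd.2.1 hd.2.2 ?_
        rw [← hdi, Prod.mk.eta]
        exact hd.1
      · rintro ⟨h1, h2⟩
        refine ⟨h1, ?_⟩
        intro c hc1 hc2 hcT
        refine h2 ?_
        rw [hRowsJdef, Finset.mem_image]
        refine ⟨(c, i), ?_, rfl⟩
        rw [hTjdef, Finset.mem_filter]
        exact ⟨hcT, hc1, hc2⟩
    have hDfincard : Dfin.card = 2 * (n - j + 1) := by
      have h1 : Finset.Icc j (2 * n) \ RowsJ =
          Finset.Icc j (2 * n) \ (RowsJ ∩ Finset.Icc j (2 * n)) := by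
        ext r
        simp only [Finset.mem_sdiff, Finset.mem_inter]
        tauto
      rw [hDeq, h1, Finset.card_sdiff_of_subset (Finset.inter_subset_right), hmid, Nat.card_Icc]
      omega
    have hAfincard : Afin.card = 2 * (n - j + 1) := by
      rw [hAfin, Finset.card_union_of_disjoint, Nat.card_Icc, Nat.card_Icc]
      · omega
      · rw [Finset.disjoint_left]
        intro a ha hmem
        rw [Finset.mem_Icc] at ha
        rw [Finset.mem_Icc] at hmem
        omega
    have himaps : ∀ i ∈ Dfin, F^[2 * n] i ∈ Afin := by
      intro i hi
      have hi' := (hDfinmem i).mp hi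
      rw [hAfinmem]
      show Arrival n j (F^[2 * n] i)
      rw [hN4 i hi' (2 * n) (hN1 i hi')]
      exact hN2 i hi'
    have hinj2 : Set.InjOn (fun i => F^[2 * n] i) ↑Dfin := by
      intro i hi i' hi' h
      have hkey : ∀ a a', a ∈ PiDomain n j T → a' ∈ PiDomain n j T →
          F^[2 * n] a = F^[2 * n] a' → Nt a ≤ Nt a' → a = a' := by
        intro a a' ha ha' heq hNle
        obtain ⟨hij, hi2, hiR⟩ := ha
        have hiD : a ∈ PiDomain n j T := ⟨hij, hi2, hiR⟩
        obtain ⟨hij', hi2', hiR'⟩ := ha'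
        have hiD' : a' ∈ PiDomain n j T := ⟨hij', hi2', hiR'⟩
        have hi1 : 1 ≤ a := le_trans hj1 hij
        have hi1' : 1 ≤ a' := le_trans hj1 hij'
        have hpp : F^[Nt a] a = F^[Nt a'] a' := by
          rw [← hN4 a hiD (2 * n) (hN1 a hiD), ← hN4 a' hiD' (2 * n) (hN1 a' hiD')]
          exact heq
        have hdown : ∀ d, d ≤ Nt a → F^[Nt a - d] a = F^[Nt a' - d] a' := by
          intro d
          induction d with
          | zero => intro _; exact hpp
          | succ d ih =>
            intro hd
            have ihh := ih (by omega)
            have e1 : F^[Nt a - d] a = F (F^[Nt a - (d + 1)] a) := by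
              conv_lhs => rw [show (Nt a - d) = (Nt a - (d + 1)) + 1 by omega]
              rw [Function.iterate_succ_apply']
            have e2 : F^[Nt a' - d] a' = F (F^[Nt a' - (d + 1)] a') := by
              conv_lhs => rw [show (Nt a' - d) = (Nt a' - (d + 1)) + 1 by omega]
              rw [Function.iterate_succ_apply']
            have hb1 := hbounds a hi1 hi2 (Nt a - (d + 1))
            have hb2 := hbounds a' hi1' hi2' (Nt a' - (d + 1))
            exact hback _ _ hb1.1 hb1.2 hb2.1 hb2.2
              (hN3 a hiD _ (by omega)) (hN3 a' hiD' _ (by omega))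
              (by rw [← e1, ← e2]; exact ihh)
        have h0 : a = F^[Nt a' - Nt a] a' := by
          have := hdown (Nt a) le_rfl
          simpa using this
        by_cases hzero : Nt a' - Nt a = 0
        · rw [hzero] at h0
          exact h0
        · exfalso
          have e2 : F^[Nt a' - Nt a] a' = F (F^[Nt a' - Nt a - 1] a') := by
            conv_lhs => rw [show (Nt a' - Nt a) = (Nt a' - Nt a - 1) + 1 by omega]
            rw [Function.iterate_succ_apply']
          have hb := hbounds a' hi1' hi2' (Nt a' - Nt a - 1)
          obtain ⟨c, hc1, hc2, hcT⟩ := hFR _ hb.1 hb.2 (hN3 a' hiD' _ (by omega))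
          rw [← e2, ← h0] at hcT
          exact hiR c hc1 hc2 hcT
      have hiP := (hDfinmem i).mp (Finset.mem_coe.mp hi)
      have hiP' := (hDfinmem i').mp (Finset.mem_coe.mp hi')
      rcases le_total (Nt i) (Nt i') with h' | h'
      · exact hkey i i' hiP hiP' h h'
      · exact (hkey i' i hiP' hiP h.symm h').symm
    have himg : Dfin.image (fun i => F^[2 * n] i) = Afin := by
      apply Finset.eq_of_subset_of_card_le
      · intro a ha
        rw [Finset.mem_image] at ha
        obtain ⟨i, hi, rfl⟩ := ha
        exact himaps i hi
      · rw [Finset.card_image_of_injOn hinj2, hDfincard, hAfincard]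
    intro a ha
    have haA : a ∈ Afin := (hAfinmem a).mpr ha
    rw [← himg, Finset.mem_image] at haA
    obtain ⟨i, hi, hfi⟩ := haA
    exact ⟨i, (hDfinmem i).mp hi, hfi⟩
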